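/- Let f, φ : 𝒳 → ℝ be twice continuously differentiable on an open convex set 𝒳 ⊆ ℝ^d, with ∇²φ(x) positive definite. If ⟨∇f(x') − ∇f(x), ∇φ(x') − ∇φ(x)⟩ ≥ m·‖∇φ(x') − ∇φ(x)‖² for all x, x' ∈ 𝒳, then m·∇²φ(x) ⪯ ∇²f(x) for all x ∈ 𝒳 (in the Loewner order). -/

import Mathlib

open InnerProductSpace Filter Topology

lemma aux_loewner {E : Type*} [NormedAddCommGroup E] [InnerProductSpace ℝ E]
    [FiniteDimensional ℝ E] (S A : E →L[ℝ] E)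
    (hS : ∀ v w : E, (inner ℝ (S v) w : ℝ) = inner ℝ v (S w))
    (hA : ∀ v : E, v ≠ 0 → (0 : ℝ) < inner ℝ (A v) v)
    (h : ∀ v : E, (0 : ℝ) ≤ inner ℝ (S v) (A v)) :
    ∀ v : E, (0 : ℝ) ≤ inner ℝ (S v) v := by
  rcases subsingleton_or_nontrivial E with hE | hE
  · intro v
    have : v = 0 := Subsingleton.elim v 0
    simp [this]
  · set T : E →ₗ[ℝ] E := (S : E →ₗ[ℝ] E)
    have hT : T.IsSymmetric := fun v w => hS v w
    set μ : ℝ := ⨅ x : { x : E // x ≠ 0 }, RCLike.re (inner ℝ (T x) (x : E) : ℝ) / ‖(x : E)‖ ^ 2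
      with hμ
    have hev : Module.End.HasEigenvalue T μ := by
      exact hT.hasEigenvalue_iInf_of_finiteDimensional
    obtain ⟨u, hu⟩ := hev.exists_hasEigenvector
    have hu0 : u ≠ 0 := hu.right
    have hTu : S u = μ • u := hu.apply_eq_smul
    have hμ0 : 0 ≤ μ := by
      have h1 : (0:ℝ) ≤ inner ℝ (S u) (A u) := h u
      rw [hTu, real_inner_smul_left] at h1
      have h2 : (0:ℝ) < inner ℝ u (A u) := by
        rw [real_inner_comm]; exact hA u hu0
      nlinarith
    -- BddBelow
    have hbdd : BddBelow (Set.range fun x : { x : E // x ≠ 0 } =>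
        RCLike.re (inner ℝ (T x) (x : E) : ℝ) / ‖(x : E)‖ ^ 2) := by
      refine ⟨-‖S‖, ?_⟩
      rintro _ ⟨⟨x, hx⟩, rfl⟩
      have hx0 : (0:ℝ) < ‖x‖ ^ 2 := pow_pos (norm_pos_iff.mpr hx) 2
      rw [le_div_iff₀ hx0]
      have h1 : |(inner ℝ (S x) x : ℝ)| ≤ ‖S x‖ * ‖x‖ := abs_real_inner_le_norm _ _
      have h2 : ‖S x‖ ≤ ‖S‖ * ‖x‖ := S.le_opNorm x
      have : -(‖S‖ * ‖x‖ ^ 2) ≤ (inner ℝ (S x) x : ℝ) := by nlinarith [abs_nonneg (inner ℝ (S x) x : ℝ), neg_abs_le (inner ℝ (S x) x : ℝ), norm_nonneg x]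
      simpa [T] using this
    intro v
    rcases eq_or_ne v 0 with rfl | hv
    · simp
    · have hle : μ ≤ RCLike.re (inner ℝ (T v) (v : E) : ℝ) / ‖v‖ ^ 2 := by
        rw [hμ]
        exact ciInf_le hbdd ⟨v, hv⟩
      have hv0 : (0:ℝ) < ‖v‖ ^ 2 := pow_pos (norm_pos_iff.mpr hv) 2
      have : (0:ℝ) ≤ (inner ℝ (S v) v : ℝ) / ‖v‖ ^ 2 := le_trans hμ0 (by simpa [T] using hle)
      have := (div_nonneg_iff.mp this)
      rcases this with ⟨h1, _⟩ | ⟨_, h2⟩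
      · exact h1
      · nlinarith

lemma aux_key {E : Type*} [NormedAddCommGroup E] [InnerProductSpace ℝ E]
    (𝒳 : Set E) (hopen : IsOpen 𝒳)
    (Df Dφ : E → E) (Hfx Hφx : E →L[ℝ] E) {x : E} (hx : x ∈ 𝒳)
    (hHf : HasFDerivAt Df Hfx x) (hHφ : HasFDerivAt Dφ Hφx x)
    (m : ℝ)
    (hsc : ∀ x' ∈ 𝒳, m * ‖Dφ x' - Dφ x‖ ^ 2 ≤ inner ℝ (Df x' - Df x) (Dφ x' - Dφ x))
    (v : E) :
    m * ‖Hφx v‖ ^ 2 ≤ (inner ℝ (Hfx v) (Hφx v) : ℝ) := by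
  have hline : ∀ t : ℝ, HasDerivAt (fun t : ℝ => x + t • v) v t := fun t =>
    by simpa using ((hasDerivAt_id t).smul_const v).const_add x
  have h0 : x + (0:ℝ) • v = x := by simp
  have hgf : HasDerivAt (fun t : ℝ => Df (x + t • v)) (Hfx v) 0 := by
    have := (h0 ▸ hHf).comp_hasDerivAt 0 (hline 0)
    simpa [Function.comp_def] using this
  have hgφ : HasDerivAt (fun t : ℝ => Dφ (x + t • v)) (Hφx v) 0 := by
    have := (h0 ▸ hHφ).comp_hasDerivAt 0 (hline 0)
    simpa [Function.comp_def] using this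
  have hsf : Tendsto (slope (fun t : ℝ => Df (x + t • v)) 0) (𝓝[≠] 0) (𝓝 (Hfx v)) :=
    hasDerivAt_iff_tendsto_slope.mp hgf
  have hsφ : Tendsto (slope (fun t : ℝ => Dφ (x + t • v)) 0) (𝓝[≠] 0) (𝓝 (Hφx v)) :=
    hasDerivAt_iff_tendsto_slope.mp hgφ
  have hT1 : Tendsto (fun t : ℝ => m * ‖slope (fun t : ℝ => Dφ (x + t • v)) 0 t‖ ^ 2)
      (𝓝[≠] 0) (𝓝 (m * ‖Hφx v‖ ^ 2)) :=
    tendsto_const_nhds.mul ((hsφ.norm).pow 2)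
  have hT2 : Tendsto (fun t : ℝ =>
      (inner ℝ (slope (fun t : ℝ => Df (x + t • v)) 0 t)
        (slope (fun t : ℝ => Dφ (x + t • v)) 0 t) : ℝ))
      (𝓝[≠] 0) (𝓝 (inner ℝ (Hfx v) (Hφx v))) := hsf.inner hsφ
  have hmem : ∀ᶠ t : ℝ in 𝓝[≠] 0, x + t • v ∈ 𝒳 := by
    have hc : ContinuousAt (fun t : ℝ => x + t • v) 0 := by fun_prop
    have := hc.eventually_mem (hopen.mem_nhds (by simpa using hx))
    exact nhdsWithin_le_nhds this
  have hev : ∀ᶠ t : ℝ in 𝓝[≠] 0,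
      m * ‖slope (fun t : ℝ => Dφ (x + t • v)) 0 t‖ ^ 2 ≤
      (inner ℝ (slope (fun t : ℝ => Df (x + t • v)) 0 t)
        (slope (fun t : ℝ => Dφ (x + t • v)) 0 t) : ℝ) := by
    filter_upwards [hmem, self_mem_nhdsWithin] with t hmemt (ht : t ≠ 0)
    have hst : ∀ g : ℝ → E, slope g 0 t = t⁻¹ • (g t - g 0) := fun g => by
      simp [slope_def_module]
    simp only [hst, h0]
    have h1 := hsc (x + t • v) hmemt
    rw [norm_smul, real_inner_smul_left, real_inner_smul_right, mul_pow]
    have ht2 : (0:ℝ) ≤ t⁻¹ ^ 2 := sq_nonneg _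
    calc m * (|t⁻¹| ^ 2 * ‖Dφ (x + t • v) - Dφ x‖ ^ 2)
        = t⁻¹ ^ 2 * (m * ‖Dφ (x + t • v) - Dφ x‖ ^ 2) := by rw [sq_abs]; ring
      _ ≤ t⁻¹ ^ 2 * (inner ℝ (Df (x + t • v) - Df x) (Dφ (x + t • v) - Dφ x) : ℝ) :=
          mul_le_mul_of_nonneg_left h1 ht2
      _ = t⁻¹ * (t⁻¹ * (inner ℝ (Df (x + t • v) - Df x) (Dφ (x + t • v) - Dφ x) : ℝ)) := by ring
  exact le_of_tendsto_of_tendsto hT1 hT2 hev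

lemma aux_symm {E : Type*} [NormedAddCommGroup E] [InnerProductSpace ℝ E]
    [CompleteSpace E] (𝒳 : Set E) (hopen : IsOpen 𝒳)
    (f : E → ℝ) (Df : E → E) (Hfx : E →L[ℝ] E) {x : E} (hx : x ∈ 𝒳)
    (hDf : ∀ y ∈ 𝒳, HasGradientAt f (Df y) y)
    (hHf : HasFDerivAt Df Hfx x) :
    ∀ v w : E, (inner ℝ (Hfx v) w : ℝ) = inner ℝ (Hfx w) v := by
  set L : E →L[ℝ] (E →L[ℝ] ℝ) :=
    (toDual ℝ E).toContinuousLinearEquiv.toContinuousLinearMap with hL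
  have hev : ∀ᶠ y in 𝓝 x, HasFDerivAt f (L (Df y)) y := by
    filter_upwards [hopen.mem_nhds hx] with y hy
    exact (hDf y hy).hasFDerivAt
  have hd2 : HasFDerivAt (fun y => L (Df y)) (L.comp Hfx) x := L.hasFDerivAt.comp x hHf
  intro v w
  have := second_derivative_symmetric_of_eventually hev hd2 v w
  simpa [hL, toDual_apply_apply] using this

/-- Relative strong convexity via gradients implies `m ∇²φ(x) ⪯ ∇²f(x)` in the Loewner
order: if `⟨∇f(x') - ∇f(x), ∇φ(x') - ∇φ(x)⟩ ≥ m ‖∇φ(x') - ∇φ(x)‖²` on an open convex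
set where `∇²φ ≻ 0`, then `m ⟨∇²φ(x) v, v⟩ ≤ ⟨∇²f(x) v, v⟩` for all `x ∈ 𝒳`, `v`. -/
theorem stmt_4 {d : ℕ} (𝒳 : Set (EuclideanSpace ℝ (Fin d)))
    (hopen : IsOpen 𝒳) (hconv : Convex ℝ 𝒳)
    (f φ : EuclideanSpace ℝ (Fin d) → ℝ)
    (hf : ContDiffOn ℝ 2 f 𝒳) (hφ : ContDiffOn ℝ 2 φ 𝒳)
    (Df Dφ : EuclideanSpace ℝ (Fin d) → EuclideanSpace ℝ (Fin d))
    (hDf : ∀ x ∈ 𝒳, HasGradientAt f (Df x) x)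
    (hDφ : ∀ x ∈ 𝒳, HasGradientAt φ (Dφ x) x)
    (Hf Hφ : EuclideanSpace ℝ (Fin d) →
      EuclideanSpace ℝ (Fin d) →L[ℝ] EuclideanSpace ℝ (Fin d))
    (hHf : ∀ x ∈ 𝒳, HasFDerivAt Df (Hf x) x)
    (hHφ : ∀ x ∈ 𝒳, HasFDerivAt Dφ (Hφ x) x)
    (hpos : ∀ x ∈ 𝒳, ∀ v : EuclideanSpace ℝ (Fin d), v ≠ 0 → (0 : ℝ) < inner ℝ (Hφ x v) v)
    (m : ℝ) (hm : 0 < m)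
    (hsc : ∀ x ∈ 𝒳, ∀ x' ∈ 𝒳,
      m * ‖Dφ x' - Dφ x‖ ^ 2 ≤ inner ℝ (Df x' - Df x) (Dφ x' - Dφ x)) :
    ∀ x ∈ 𝒳, ∀ v : EuclideanSpace ℝ (Fin d),
      m * (inner ℝ (Hφ x v) v : ℝ) ≤ inner ℝ (Hf x v) v := by
  intro x hx v
  have symf := aux_symm 𝒳 hopen f Df (Hf x) hx hDf (hHf x hx)
  have symφ := aux_symm 𝒳 hopen φ Dφ (Hφ x) hx hDφ (hHφ x hx)
  set S : EuclideanSpace ℝ (Fin d) →L[ℝ] EuclideanSpace ℝ (Fin d) := Hf x - m • Hφ x with hSdef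
  have hSapp : ∀ u, S u = Hf x u - m • Hφ x u := fun u => rfl
  have hSinner : ∀ u w : EuclideanSpace ℝ (Fin d),
      (inner ℝ (S u) w : ℝ) = inner ℝ (Hf x u) w - m * inner ℝ (Hφ x u) w := by
    intro u w
    rw [hSapp, inner_sub_left, real_inner_smul_left]
  have hS : ∀ u w : EuclideanSpace ℝ (Fin d), (inner ℝ (S u) w : ℝ) = inner ℝ u (S w) := by
    intro u w
    rw [hSinner]
    conv_rhs => rw [real_inner_comm]
    rw [hSinner, symf u w, symφ u w]
  have hA : ∀ u : EuclideanSpace ℝ (Fin d), u ≠ 0 → (0:ℝ) < inner ℝ (Hφ x u) u :=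
    fun u hu => hpos x hx u hu
  have hkey : ∀ u : EuclideanSpace ℝ (Fin d), (0:ℝ) ≤ inner ℝ (S u) (Hφ x u) := by
    intro u
    have h1 := aux_key 𝒳 hopen Df Dφ (Hf x) (Hφ x) hx (hHf x hx) (hHφ x hx) m
      (fun x' hx' => hsc x hx x' hx') u
    rw [hSinner]
    have h2 : (inner ℝ (Hφ x u) (Hφ x u) : ℝ) = ‖Hφ x u‖ ^ 2 := real_inner_self_eq_norm_sq _
    rw [h2]
    linarith
  have := aux_loewner S (Hφ x) hS hA hkey v
  rw [hSinner] at this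
  linarith
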